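/- (Ratio limit of binomial coefficients) Let α ∈ (0,1), let r, s be natural numbers with s ≤ r, and let (k_n) be a sequence of natural numbers with k_n ≤ n for all n and k_n/n → α as n → ∞. Then the quotient C(n−r, k_n−s) / C(n, k_n) (real division of binomial coefficients, subtraction in ℕ, which is well-defined for all large n since 0 < α < 1) converges to α^s (1−α)^{r−s} as n → ∞. -/
import Mathlib


open Filter

private lemma ratio_step_same (m j : ℕ) (hj : j ≤ m) :
    ((Nat.choose m j : ℝ)) / ((Nat.choose (m+1) j : ℝ)) = ((m:ℝ)+1-j)/((m:ℝ)+1) := by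
  have h1 : (m+1) * Nat.choose m j = Nat.choose (m+1) j * (m+1-j) :=
    (Nat.add_one_mul_choose_eq m j).trans (Nat.choose_succ_right_eq (m+1) j)
  have hc : (0:ℝ) < Nat.choose (m+1) j :=
    by exact_mod_cast Nat.choose_pos (hj.trans (Nat.le_succ m))
  have h2 : ((m:ℝ)+1) * Nat.choose m j = Nat.choose (m+1) j * ((m:ℝ)+1-j) := by
    have := congrArg (Nat.cast : ℕ → ℝ) h1
    push_cast [Nat.cast_sub (hj.trans (Nat.le_succ m))] at this
    linarith
  rw [div_eq_div_iff hc.ne' (by positivity)]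
  nlinarith [h2]

private lemma ratio_step_diag (m j : ℕ) (hj : j ≤ m) :
    ((Nat.choose m j : ℝ)) / ((Nat.choose (m+1) (j+1) : ℝ)) = ((j:ℝ)+1)/((m:ℝ)+1) := by
  have h1 : (m+1) * Nat.choose m j = Nat.choose (m+1) (j+1) * (j+1) :=
    Nat.add_one_mul_choose_eq m j
  have hc : (0:ℝ) < Nat.choose (m+1) (j+1) :=
    by exact_mod_cast Nat.choose_pos (Nat.succ_le_succ hj)
  have h2 : ((m:ℝ)+1) * Nat.choose m j = Nat.choose (m+1) (j+1) * ((j:ℝ)+1) := by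
    exact_mod_cast congrArg (Nat.cast : ℕ → ℝ) h1
  rw [div_eq_div_iff hc.ne' (by positivity)]
  nlinarith [h2]

private lemma aux_ratio (α : ℝ) (hα0 : 0 < α) (hα1 : α < 1)
    (k : ℕ → ℕ) (hk : ∀ n, k n ≤ n)
    (hlim : Tendsto (fun n : ℕ => (k n : ℝ) / (n : ℝ)) atTop (nhds α)) :
    ∀ r s : ℕ, s ≤ r →
    Tendsto (fun n : ℕ => (Nat.choose (n - r) (k n - s) : ℝ) / (Nat.choose n (k n) : ℝ))
      atTop (nhds (α ^ s * (1 - α) ^ (r - s))) := by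
  -- eventual bounds on k n
  have hge : ∀ c : ℕ, ∀ᶠ n in atTop, c ≤ k n := by
    intro c
    have h1 : ∀ᶠ n : ℕ in atTop, α/2 ≤ (k n:ℝ)/n :=
      hlim.eventually (eventually_ge_nhds (by linarith))
    filter_upwards [h1, eventually_ge_atTop (⌈2*c/α⌉₊ + 1)] with n hn1 hn2
    have hn0 : (0:ℝ) < n := by
      have : 1 ≤ n := by omega
      exact_mod_cast Nat.lt_of_lt_of_le Nat.zero_lt_one this
    have h3 : 2*c/α ≤ (n:ℝ) := le_trans (Nat.le_ceil _) (by exact_mod_cast Nat.le_of_succ_le hn2)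
    have h5 : α/2 * n ≤ k n := (le_div_iff₀ hn0).mp hn1
    have h6 : (c:ℝ) ≤ k n := by
      have : (c:ℝ) ≤ α/2 * n := by
        rw [div_le_iff₀ hα0] at h3
        nlinarith
      linarith
    exact_mod_cast h6
  have hle : ∀ c : ℕ, ∀ᶠ n in atTop, k n + c ≤ n := by
    intro c
    have h1 : ∀ᶠ n : ℕ in atTop, (k n:ℝ)/n ≤ (1+α)/2 :=
      hlim.eventually (eventually_le_nhds (by linarith))
    filter_upwards [h1, eventually_ge_atTop (⌈2*c/(1-α)⌉₊ + 1)] with n hn1 hn2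
    have hn0 : (0:ℝ) < n := by
      have : 1 ≤ n := by omega
      exact_mod_cast Nat.lt_of_lt_of_le Nat.zero_lt_one this
    have h3 : 2*c/(1-α) ≤ (n:ℝ) := le_trans (Nat.le_ceil _) (by exact_mod_cast Nat.le_of_succ_le hn2)
    have h5 : (k n:ℝ) ≤ (1+α)/2 * n := (div_le_iff₀ hn0).mp hn1
    have h6 : (k n:ℝ) + c ≤ n := by
      have : (c:ℝ) ≤ (1-α)/2 * n := by
        rw [div_le_iff₀ (by linarith)] at h3
        nlinarith
      linarith
    exact_mod_cast h6
  -- basic limits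
  have hA : ∀ a b : ℝ, Tendsto (fun n : ℕ => ((k n:ℝ) - a)/((n:ℝ) - b)) atTop (nhds α) := by
    intro a b
    have h1 : Tendsto (fun n : ℕ => ((k n:ℝ)/n - a/n)/(1 - b/n)) atTop (nhds ((α - 0)/(1-0))) :=
      Tendsto.div (hlim.sub (tendsto_const_div_atTop_nhds_zero_nat a))
        (tendsto_const_nhds.sub (tendsto_const_div_atTop_nhds_zero_nat b)) (by norm_num)
    norm_num at h1
    apply h1.congr'
    filter_upwards [eventually_ge_atTop (⌈b⌉₊ + 1)] with n hn
    have hb : b < (n:ℝ) := lt_of_le_of_lt (Nat.le_ceil b) (by exact_mod_cast hn)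
    have hn0 : (n:ℝ) ≠ 0 := Nat.cast_ne_zero.mpr (by omega)
    have hnb : (n:ℝ) - b ≠ 0 := by intro h; nlinarith
    field_simp
  have hB : ∀ a b : ℝ, Tendsto (fun n : ℕ => ((n:ℝ) - (k n:ℝ) - a)/((n:ℝ) - b)) atTop
      (nhds (1 - α)) := by
    intro a b
    have h1 : Tendsto (fun n : ℕ => (1 - (k n:ℝ)/n - a/n)/(1 - b/n)) atTop
        (nhds ((1 - α - 0)/(1-0))) :=
      Tendsto.div ((tendsto_const_nhds.sub hlim).sub (tendsto_const_div_atTop_nhds_zero_nat a))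
        (tendsto_const_nhds.sub (tendsto_const_div_atTop_nhds_zero_nat b)) (by norm_num)
    norm_num at h1
    apply h1.congr'
    filter_upwards [eventually_ge_atTop (⌈b⌉₊ + 1)] with n hn
    have hb : b < (n:ℝ) := lt_of_le_of_lt (Nat.le_ceil b) (by exact_mod_cast hn)
    have hn0 : (n:ℝ) ≠ 0 := Nat.cast_ne_zero.mpr (by omega)
    have hnb : (n:ℝ) - b ≠ 0 := by intro h; nlinarith
    field_simp
  intro r
  induction r with
  | zero =>
    intro s hs
    have hs0 : s = 0 := Nat.le_zero.mp hs
    subst hs0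
    simp only [Nat.sub_zero, pow_zero, one_mul]
    have heq : ∀ n : ℕ, ((Nat.choose n (k n) : ℝ)) / (Nat.choose n (k n) : ℝ) = 1 := by
      intro n
      exact div_self (by exact_mod_cast (Nat.choose_pos (hk n)).ne')
    exact Tendsto.congr (fun n => (heq n).symm) tendsto_const_nhds
  | succ r ih =>
    intro s hs
    rcases Nat.lt_or_ge s (r+1) with h | h
    · -- s ≤ r
      have hs' : s ≤ r := Nat.lt_succ_iff.mp h
      have hIH := ih s hs'
      have hg : Tendsto
          (fun n : ℕ => ((Nat.choose (n - (r+1)) (k n - s) : ℝ)) /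
            (Nat.choose (n - r) (k n - s) : ℝ)) atTop (nhds (1 - α)) := by
        apply (hB ((r:ℝ) - s) r).congr'
        filter_upwards [hge s, hle (r+2)] with n h1 h2
        have hm1 : n - r = (n - (r+1)) + 1 := by omega
        rw [hm1, ratio_step_same (n - (r+1)) (k n - s) (by omega)]
        rw [Nat.cast_sub (by omega : r+1 ≤ n), Nat.cast_sub (by omega : s ≤ k n)]
        push_cast
        ring
      have hval : α ^ s * (1 - α) ^ (r + 1 - s) = (1 - α) * (α ^ s * (1 - α) ^ (r - s)) := by
        rw [show r+1-s = (r-s)+1 by omega, pow_succ]; ring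
      rw [hval]
      apply (hg.mul hIH).congr'
      filter_upwards [hge s, hle (r+2)] with n h1 h2
      have hpos : ((Nat.choose (n - r) (k n - s) : ℝ)) ≠ 0 := by
        exact_mod_cast (Nat.choose_pos (by omega : k n - s ≤ n - r)).ne'
      field_simp
    · -- s = r+1
      have hs1 : s = r + 1 := le_antisymm hs h
      subst hs1
      have hIH := ih r le_rfl
      have hg : Tendsto
          (fun n : ℕ => ((Nat.choose (n - (r+1)) (k n - (r+1)) : ℝ)) /
            (Nat.choose (n - r) (k n - r) : ℝ)) atTop (nhds α) := by
        apply (hA ((r:ℝ)) r).congr'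
        filter_upwards [hge (r+1), hle (r+2)] with n h1 h2
        have hm1 : n - r = (n - (r+1)) + 1 := by omega
        have hj1 : k n - r = (k n - (r+1)) + 1 := by omega
        rw [hm1, hj1, ratio_step_diag (n - (r+1)) (k n - (r+1)) (by omega)]
        rw [Nat.cast_sub (by omega : r+1 ≤ n), Nat.cast_sub (by omega : r+1 ≤ k n)]
        push_cast
        ring
      have hval : α ^ (r+1) * (1 - α) ^ (r + 1 - (r+1)) = α * (α ^ r * (1 - α) ^ (r - r)) := by
        simp [pow_succ]; ring
      rw [hval]
      apply (hg.mul hIH).congr'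
      filter_upwards [hge (r+1), hle (r+2)] with n h1 h2
      have hpos : ((Nat.choose (n - r) (k n - r) : ℝ)) ≠ 0 := by
        exact_mod_cast (Nat.choose_pos (by omega : k n - r ≤ n - r)).ne'
      field_simp

/-- Ratio limit of binomial coefficients: if `kₙ/n → α ∈ (0,1)` and `s ≤ r`,
then `C(n−r, kₙ−s) / C(n, kₙ) → α^s (1−α)^{r−s}`. -/
theorem binomial_ratio_limit (α : ℝ) (hα0 : 0 < α) (hα1 : α < 1)
    (r s : ℕ) (hsr : s ≤ r) (k : ℕ → ℕ) (hk : ∀ n, k n ≤ n)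
    (hlim : Tendsto (fun n : ℕ => (k n : ℝ) / (n : ℝ)) atTop (nhds α)) :
    Tendsto (fun n : ℕ => (Nat.choose (n - r) (k n - s) : ℝ) / (Nat.choose n (k n) : ℝ))
      atTop (nhds (α ^ s * (1 - α) ^ (r - s))) :=
  aux_ratio α hα0 hα1 k hk hlim r s hsr
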